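/- Let 0 < q < 1 and λ > 0. For every z with -λ/2 < z ≤ λ/2, the integral ∫_{-z}^{λ/2} q·(λ/2 - t)^{q-1}·(z+t)^{q-1} dt is at most 2^{2-2q}·(z + λ/2)^{2q-1}. -/

import Mathlib

open intervalIntegral
open MeasureTheory

theorem stmt_0 (q lam : ℝ) (hq0 : 0 < q) (hq1 : q < 1) (hlam : 0 < lam)
    (z : ℝ) (hz1 : -lam/2 < z) (hz2 : z ≤ lam/2) :
    (∫ t in (-z)..(lam/2), q * (lam/2 - t) ^ (q-1) * (z + t) ^ (q-1)) ≤
      2 ^ ((2:ℝ) - 2*q) * (z + lam/2) ^ (2*q - 1) := by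
  set a : ℝ := -z with ha
  set b : ℝ := lam/2 with hb
  set L : ℝ := z + lam/2 with hLdef
  have hL0 : 0 < L := by simp only [hLdef]; linarith
  set m : ℝ := (a + b)/2 with hm
  have ham : a ≤ m := by simp only [hm, ha, hb]; linarith
  have hmb : m ≤ b := by simp only [hm, ha, hb]; linarith
  have hbm : b - m = L/2 := by simp only [hm, ha, hb, hLdef]; ring
  have hma : m - a = L/2 := by simp only [hm, ha, hb, hLdef]; ring
  have hL2 : (0:ℝ) < L/2 := by linarith
  have hq1' : q - 1 ≤ 0 := by linarith
  have hq1'' : (-1:ℝ) < q - 1 := by linarith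
  have hzt : ∀ t : ℝ, z + t = t - a := by intro t; simp [ha]; ring
  simp only [hzt, mul_assoc]
  have hint_ta : ∀ u v : ℝ, IntervalIntegrable (fun t => (t - a) ^ (q-1)) volume u v := by
    intro u v
    simpa using (intervalIntegrable_rpow' (a := u - a) (b := v - a) hq1'').comp_sub_right a
  have hint_bt : ∀ u v : ℝ, IntervalIntegrable (fun t => (b - t) ^ (q-1)) volume u v := by
    intro u v
    simpa using (intervalIntegrable_rpow' (a := b - u) (b := b - v) hq1'').comp_sub_left b
  have hcont_bt : ContinuousOn (fun t : ℝ => q * (b - t) ^ (q-1)) (Set.uIcc a m) := by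
    apply ContinuousOn.mul continuousOn_const
    apply ContinuousOn.rpow_const (by fun_prop)
    intro x hx
    left
    rw [Set.uIcc_of_le ham] at hx
    have : x ≤ m := hx.2
    have hbx : 0 < b - x := by
      have : 0 < b - m := by rw [hbm]; exact hL2
      linarith
    linarith
  have hcont_ta : ContinuousOn (fun t : ℝ => q * (t - a) ^ (q-1)) (Set.uIcc m b) := by
    apply ContinuousOn.mul continuousOn_const
    apply ContinuousOn.rpow_const (by fun_prop)
    intro x hx
    left
    rw [Set.uIcc_of_le hmb] at hx
    have hxa : 0 < x - a := by
      have : 0 < m - a := by rw [hma]; exact hL2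
      linarith [hx.1]
    linarith
  have int1 : IntervalIntegrable (fun t => q * ((b - t) ^ (q-1) * (t - a) ^ (q-1)))
      volume a m := by
    have := ((hint_ta a m).continuousOn_mul hcont_bt)
    simpa [mul_assoc] using this
  have int2 : IntervalIntegrable (fun t => q * ((b - t) ^ (q-1) * (t - a) ^ (q-1)))
      volume m b := by
    have h := ((hint_bt m b).mul_continuousOn hcont_ta)
    have h2 : (fun t => (b - t) ^ (q-1) * (q * (t - a) ^ (q-1)))
        = fun t => q * ((b - t) ^ (q-1) * (t - a) ^ (q-1)) := by
      funext t; ring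
    rwa [h2] at h
  -- split
  rw [← intervalIntegral.integral_add_adjacent_intervals int1 int2]
  -- dominating integrands on each half
  have intD1 : IntervalIntegrable (fun t => q * ((L/2) ^ (q-1) * (t - a) ^ (q-1)))
      volume a m := by
    simpa [mul_assoc] using ((hint_ta a m).const_mul (q * (L/2) ^ (q-1)))
  have intD2 : IntervalIntegrable (fun t => q * ((b - t) ^ (q-1) * (L/2) ^ (q-1)))
      volume m b := by
    have := ((hint_bt m b).const_mul q).mul_const ((L/2) ^ (q-1))
    simpa [mul_assoc] using this
  have bound1 : (∫ t in a..m, q * ((b - t) ^ (q-1) * (t - a) ^ (q-1)))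
      ≤ ∫ t in a..m, q * ((L/2) ^ (q-1) * (t - a) ^ (q-1)) := by
    apply intervalIntegral.integral_mono_on ham int1 intD1
    intro t ht
    apply mul_le_mul_of_nonneg_left _ hq0.le
    apply mul_le_mul_of_nonneg_right _ (Real.rpow_nonneg (by linarith [ht.1]) _)
    apply Real.rpow_le_rpow_of_nonpos hL2 _ hq1'
    rw [← hbm]; linarith [ht.2]
  have bound2 : (∫ t in m..b, q * ((b - t) ^ (q-1) * (t - a) ^ (q-1)))
      ≤ ∫ t in m..b, q * ((b - t) ^ (q-1) * (L/2) ^ (q-1)) := by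
    apply intervalIntegral.integral_mono_on hmb int2 intD2
    intro t ht
    apply mul_le_mul_of_nonneg_left _ hq0.le
    apply mul_le_mul_of_nonneg_left _ (Real.rpow_nonneg (by linarith [ht.2]) _)
    apply Real.rpow_le_rpow_of_nonpos hL2 _ hq1'
    rw [← hma]; linarith [ht.1]
  -- compute dominating integrals
  have base1 : (∫ t in a..m, (t - a) ^ (q-1)) = (L/2) ^ q / q := by
    rw [intervalIntegral.integral_comp_sub_right (fun x => x ^ (q-1)) a, sub_self,
      integral_rpow (Or.inl hq1'')]
    rw [hma, sub_add_cancel, Real.zero_rpow (by linarith), sub_zero]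
  have base2 : (∫ t in m..b, (b - t) ^ (q-1)) = (L/2) ^ q / q := by
    rw [intervalIntegral.integral_comp_sub_left (fun x => x ^ (q-1)) b, sub_self,
      integral_rpow (Or.inl hq1'')]
    rw [hbm, sub_add_cancel, Real.zero_rpow (by linarith), sub_zero]
  have hpow : (L/2) ^ (q-1) * ((L/2) ^ q / q) * q = (L/2) ^ (2*q - 1) := by
    rw [mul_assoc, div_mul_cancel₀ _ (ne_of_gt hq0), ← Real.rpow_add hL2]
    congr 1; ring
  have val1 : (∫ t in a..m, q * ((L/2) ^ (q-1) * (t - a) ^ (q-1))) = (L/2) ^ (2*q - 1) := by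
    simp only [← mul_assoc, intervalIntegral.integral_const_mul, base1]
    rw [← hpow]; ring
  have val2 : (∫ t in m..b, q * ((b - t) ^ (q-1) * (L/2) ^ (q-1))) = (L/2) ^ (2*q - 1) := by
    have : (fun t => q * ((b - t) ^ (q-1) * (L/2) ^ (q-1)))
        = fun t => (q * (L/2) ^ (q-1)) * (b - t) ^ (q-1) := by funext t; ring
    rw [this, intervalIntegral.integral_const_mul, base2, ← hpow]; ring
  have final : (L/2) ^ (2*q - 1) + (L/2) ^ (2*q - 1)
      = 2 ^ ((2:ℝ) - 2*q) * L ^ (2*q - 1) := by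
    have h2 : ((L:ℝ)/2) ^ (2*q-1) = L ^ (2*q-1) / 2 ^ (2*q-1) :=
      Real.div_rpow hL0.le (by norm_num : (0:ℝ) ≤ 2) (2*q-1)
    have h3 : (2:ℝ) ^ ((2:ℝ)-2*q) * 2 ^ (2*q-1) = 2 := by
      rw [← Real.rpow_add (by norm_num)]; norm_num
    have h4 : (0:ℝ) < 2 ^ (2*q-1) := Real.rpow_pos_of_pos (by norm_num) _
    have h5 : (2:ℝ) ^ ((2:ℝ)-2*q) = 2 / 2 ^ (2*q-1) := by rw [eq_div_iff h4.ne', h3]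
    rw [h2, h5]
    ring
  calc (∫ t in a..m, q * ((b - t) ^ (q-1) * (t - a) ^ (q-1)))
        + ∫ t in m..b, q * ((b - t) ^ (q-1) * (t - a) ^ (q-1))
      ≤ (L/2) ^ (2*q - 1) + (L/2) ^ (2*q - 1) := by
        exact add_le_add (bound1.trans val1.le) (bound2.trans val2.le)
    _ = 2 ^ ((2:ℝ) - 2*q) * L ^ (2*q - 1) := final
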